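/- Let d ≥ 2 be an integer and let H = (V, E) be a hypergraph with VC-dimension at most d and with n = |V| ≥ 2d + 2 vertices. Then there exists a (d+1)-element subset T ⊆ V such that every hyperedge e ∈ E with T ⊆ e satisfies |e \ T| ≥ n / (4(d+1)^{d+1}). -/

import Mathlib

open Finset

private lemma powAux : ∀ d : ℕ, 2 ≤ d → 2^(d+1)*(d+2) ≤ 4*(d+1)^d := by
  intro d hd
  induction d with
  | zero => omega
  | succ k ih =>
    rcases Nat.lt_or_ge k 2 with h | h
    · interval_cases k
      · omega
      · norm_num
    · have IH := ih h
      have hp : 0 < (k+1)^k := Nat.pow_pos (by omega)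
      calc 2^(k+1+1)*(k+1+2) = 2^(k+1)*(2*(k+3)) := by ring
        _ ≤ 2^(k+1)*(3*(k+2)) := Nat.mul_le_mul_left _ (by omega)
        _ = 3*(2^(k+1)*(k+2)) := by ring
        _ ≤ 3*(4*(k+1)^k) := Nat.mul_le_mul_left _ IH
        _ ≤ 4*((k+2)*(k+1)^k) := by nlinarith
        _ ≤ 4*((k+2)*(k+2)^k) := by
            have := Nat.pow_le_pow_left (show k+1 ≤ k+2 by omega) k
            nlinarith
        _ = 4*(k+2)^(k+1) := by ring

private lemma countBad {α : Type*} [DecidableEq α] (V : Finset α) (v₀ : α) (hv₀ : v₀ ∈ V)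
    {k : ℕ} (j : Fin k) (F : (Fin k → α) → Finset α)
    (hF : ∀ x y : Fin k → α, (∀ i, i ≠ j → x i = y i) → F x = F y)
    (s : ℕ) (hs : ∀ x ∈ Fintype.piFinset (fun _ : Fin k => V), (F x).card ≤ s) :
    ((Fintype.piFinset (fun _ : Fin k => V)).filter (fun x => x j ∈ F x)).card
      ≤ s * V.card ^ (k - 1) := by
  classical
  set A : Finset (Fin k → α) :=
    Fintype.piFinset (fun i : Fin k => if i = j then {v₀} else V) with hA
  have hAsub : ∀ y ∈ A, ∀ i, y i ∈ V := by
    intro y hy i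
    have := Fintype.mem_piFinset.mp hy i
    split at this
    · simp only [mem_singleton] at this; rw [this]; exact hv₀
    · exact this
  have hcardA : A.card = V.card ^ (k - 1) := by
    rw [hA, Fintype.card_piFinset]
    have h1 : ∀ i : Fin k, ((if i = j then ({v₀} : Finset α) else V)).card
        = if i = j then 1 else V.card := by
      intro i; split <;> simp
    rw [Finset.prod_congr rfl (fun i _ => h1 i)]
    rw [← Finset.prod_erase_mul univ _ (mem_univ j)]
    simp only [if_pos rfl, mul_one]
    rw [Finset.prod_congr rfl (fun i hi => if_neg (Finset.mem_erase.mp hi).1),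
      Finset.prod_const, Finset.card_erase_of_mem (mem_univ j), Finset.card_univ,
      Fintype.card_fin]
    simp
  have hle : ((Fintype.piFinset (fun _ : Fin k => V)).filter (fun x => x j ∈ F x)).card
      ≤ (A.sigma (fun y => F y)).card := by
    apply Finset.card_le_card_of_injOn (fun x => ⟨Function.update x j v₀, x j⟩)
    · intro x hx
      rw [Finset.mem_coe, Finset.mem_filter] at hx
      obtain ⟨hx1, hx2⟩ := hx
      rw [Finset.mem_coe, Finset.mem_sigma]
      constructor
      · show Function.update x j v₀ ∈ A
        rw [hA, Fintype.mem_piFinset]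
        intro i
        by_cases hi : i = j
        · subst hi; simp
        · rw [Function.update_of_ne hi]
          simp only [if_neg hi]
          exact Fintype.mem_piFinset.mp hx1 i
      · have : F (Function.update x j v₀) = F x := by
          apply hF; intro i hi; rw [Function.update_of_ne hi]
        rw [this]; exact hx2
    · intro x hx y hy hxy
      simp only [Sigma.mk.inj_iff, heq_eq_eq] at hxy
      obtain ⟨h1, h2⟩ := hxy
      funext i
      by_cases hi : i = j
      · subst hi; exact h2
      · have := congrFun h1 i
        rwa [Function.update_of_ne hi, Function.update_of_ne hi] at this
  rw [Finset.card_sigma] at hle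
  calc ((Fintype.piFinset (fun _ : Fin k => V)).filter (fun x => x j ∈ F x)).card
      ≤ ∑ y ∈ A, (F y).card := hle
    _ ≤ ∑ _y ∈ A, s := Finset.sum_le_sum (fun y hy =>
        hs y (Fintype.mem_piFinset.mpr (hAsub y hy)))
    _ = A.card * s := by rw [Finset.sum_const, smul_eq_mul]
    _ = s * V.card ^ (k - 1) := by rw [hcardA, Nat.mul_comm]

theorem boundedVC_deep_tuple
    {α : Type*} [DecidableEq α] (V : Finset α) (E : Set (Finset α))
    (hE : ∀ e ∈ E, e ⊆ V)
    (d : ℕ) (hd : 2 ≤ d)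
    (hVC : ∀ S : Finset α, S ⊆ V →
      (∀ B : Finset α, B ⊆ S → ∃ e ∈ E, e ∩ S = B) → S.card ≤ d)
    (hn : 2 * d + 2 ≤ V.card) :
    ∃ T ⊆ V, T.card = d + 1 ∧
      ∀ e ∈ E, T ⊆ e →
        (V.card : ℝ) / (4 * ((d : ℝ) + 1) ^ (d + 1)) ≤ ((e \ T).card : ℝ) := by
  classical
  by_contra hcon
  push_neg at hcon
  set r : ℝ := (V.card : ℝ) / (4 * ((d : ℝ) + 1) ^ (d + 1)) with hr
  have hdenpos : (0:ℝ) < 4 * ((d : ℝ) + 1) ^ (d + 1) := by positivity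
  have hrpos : 0 < r := by
    apply div_pos _ hdenpos
    have : (0:ℕ) < V.card := by omega
    exact_mod_cast this
  have hnr : (V.card : ℝ) = 4 * ((d : ℝ) + 1) ^ (d + 1) * r := by
    rw [hr]; field_simp
  -- the contradiction hypothesis
  have hedge : ∀ T : Finset α, T ⊆ V → T.card = d + 1 →
      ∃ e ∈ E, T ⊆ e ∧ ((e \ T).card : ℝ) < r := by
    intro T hTV hTc
    obtain ⟨e, he, hTe, hlt⟩ := hcon T hTV hTc
    exact ⟨e, he, hTe, hlt⟩
  -- a set of size d+1 exists
  have hd1 : d + 1 ≤ V.card := by omega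
  by_cases hm : r ≤ 1
  · -- small case : every (d+1)-subset of V is an edge
    have hall : ∀ T : Finset α, T ⊆ V → T.card = d + 1 → T ∈ E := by
      intro T hTV hTc
      obtain ⟨e, he, hTe, hlt⟩ := hedge T hTV hTc
      have h0 : ((e \ T).card : ℝ) < 1 := lt_of_lt_of_le hlt hm
      have h0' : (e \ T).card = 0 := by exact_mod_cast Nat.lt_one_iff.mp (by exact_mod_cast h0)
      have : e \ T = ∅ := Finset.card_eq_zero.mp h0'
      have heT : e ⊆ T := Finset.sdiff_eq_empty_iff_subset.mp this
      rwa [Finset.Subset.antisymm heT hTe] at he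
    obtain ⟨S, hSV, hScard⟩ := Finset.exists_subset_card_eq hd1 (s := V)
    have hshat : ∀ B : Finset α, B ⊆ S → ∃ e ∈ E, e ∩ S = B := by
      intro B hB
      have hBc : B.card ≤ d + 1 := hScard ▸ Finset.card_le_card hB
      have hVS : d + 1 - B.card ≤ (V \ S).card := by
        rw [Finset.card_sdiff_of_subset hSV, hScard]; omega
      obtain ⟨C, hCsub, hCcard⟩ := Finset.exists_subset_card_eq hVS
      have hdisj : Disjoint B C := by
        apply Finset.disjoint_left.mpr
        intro a ha hac
        exact (Finset.mem_sdiff.mp (hCsub hac)).2 (hB ha)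
      refine ⟨B ∪ C, ?_, ?_⟩
      · apply hall
        · exact Finset.union_subset (hB.trans hSV) (hCsub.trans (Finset.sdiff_subset))
        · rw [Finset.card_union_of_disjoint hdisj, hCcard]; omega
      · rw [Finset.union_inter_distrib_right]
        have h1 : B ∩ S = B := Finset.inter_eq_left.mpr hB
        have h2 : C ∩ S = ∅ := by
          apply Finset.eq_empty_of_forall_notMem
          intro a ha
          obtain ⟨ha1, ha2⟩ := Finset.mem_inter.mp ha
          exact (Finset.mem_sdiff.mp (hCsub ha1)).2 ha2
        rw [h1, h2, Finset.union_empty]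
    have := hVC S hSV hshat
    omega
  · push_neg at hm
    -- large case
    set s : ℕ := ⌈r + d⌉₊ with hs
    have hsr : (s : ℝ) < r + d + 1 := by
      rw [hs]
      have : (0:ℝ) ≤ r + d := by have : (0:ℝ) ≤ d := Nat.cast_nonneg d; linarith
      exact_mod_cast Nat.ceil_lt_add_one this
    have hrs : r + (d:ℝ) ≤ s := Nat.le_ceil _
    -- covering function
    have hc : ∀ A : Finset α, ∃ e : Finset α,
        A ⊆ V → A.card ≤ d + 1 → e ∈ E ∧ A ⊆ e ∧ e.card ≤ s := by
      intro A
      by_cases h : A ⊆ V ∧ A.card ≤ d + 1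
      · obtain ⟨T, hAT, hTV, hTc⟩ := Finset.exists_subsuperset_card_eq h.1 h.2 hd1
        obtain ⟨e, he, hTe, hlt⟩ := hedge T hTV hTc
        refine ⟨e, fun _ _ => ⟨he, hAT.trans hTe, ?_⟩⟩
        have hcards : e.card = (e \ T).card + (d + 1) := by
          rw [← hTc]
          rw [Finset.card_sdiff_of_subset hTe]
          have := Finset.card_le_card hTe
          omega
        have : (e.card : ℝ) < r + d + 1 := by
          rw [hcards]; push_cast; linarith
        have h2 : (e.card : ℝ) < (s : ℝ) + 1 := by linarith
        have h3 : e.card < s + 1 := by exact_mod_cast h2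
        omega
      · exact ⟨∅, fun h1 h2 => absurd ⟨h1, h2⟩ h⟩
    choose cov hcov using hc
    -- probability space
    set Ω : Finset (Fin (d+1) → α) := Fintype.piFinset (fun _ : Fin (d+1) => V) with hΩdef
    have hΩcard : Ω.card = V.card ^ (d + 1) := Fintype.card_piFinset_const _ _
    obtain ⟨v₀, hv₀⟩ := Finset.card_pos.mp (show 0 < V.card by omega)
    set Bad : Finset (Fin (d+1) → α) :=
      Ω.filter (fun x => ∃ p : Finset (Fin (d+1)) × Fin (d+1),
        p.2 ∉ p.1 ∧ x p.2 ∈ cov (p.1.image x)) with hBaddef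
    set P : Finset (Finset (Fin (d+1)) × Fin (d+1)) :=
      univ.filter (fun p => p.2 ∉ p.1) with hPdef
    have hBsub : Bad ⊆ P.biUnion (fun p => Ω.filter (fun x => x p.2 ∈ cov (p.1.image x))) := by
      intro x hx
      rw [hBaddef, Finset.mem_filter] at hx
      obtain ⟨hx1, p, hp1, hp2⟩ := hx
      rw [Finset.mem_biUnion]
      exact ⟨p, by simp [hPdef, hp1], Finset.mem_filter.mpr ⟨hx1, hp2⟩⟩
    have hcount : ∀ p ∈ P,
        (Ω.filter (fun x => x p.2 ∈ cov (p.1.image x))).card ≤ s * V.card ^ d := by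
      intro p hp
      have hp2 : p.2 ∉ p.1 := (Finset.mem_filter.mp hp).2
      have := countBad V v₀ hv₀ p.2 (fun x => cov (p.1.image x))
        (fun x y hxy => by
          have himg : p.1.image x = p.1.image y :=
            Finset.image_congr (fun i hi => hxy i
              (by rintro rfl; exact hp2 (Finset.mem_coe.mp hi)))
          rw [himg])
        s
        (fun x hx => by
          have hsub : p.1.image x ⊆ V := by
            intro a ha
            obtain ⟨i, _, rfl⟩ := Finset.mem_image.mp ha
            exact Fintype.mem_piFinset.mp hx i
          have hcard : (p.1.image x).card ≤ d + 1 := by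
            calc (p.1.image x).card ≤ p.1.card := Finset.card_image_le
              _ ≤ d + 1 := by simpa using Finset.card_le_univ p.1
          exact ((hcov _ hsub hcard).2.2))
      simpa using this
    have hPcard : P.card ≤ 2 ^ (d + 1) * (d + 1) := by
      calc P.card ≤ (univ : Finset (Finset (Fin (d+1)) × Fin (d+1))).card :=
            Finset.card_filter_le _ _
        _ = 2 ^ (d + 1) * (d + 1) := by
            simp [Fintype.card_finset]
    have hBadcard : Bad.card ≤ 2 ^ (d + 1) * (d + 1) * (s * V.card ^ d) := by
      calc Bad.card ≤ (P.biUnion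
            (fun p => Ω.filter (fun x => x p.2 ∈ cov (p.1.image x)))).card :=
            Finset.card_le_card hBsub
        _ ≤ ∑ p ∈ P, (Ω.filter (fun x => x p.2 ∈ cov (p.1.image x))).card :=
            Finset.card_biUnion_le
        _ ≤ ∑ _p ∈ P, (s * V.card ^ d) := Finset.sum_le_sum hcount
        _ = P.card * (s * V.card ^ d) := by rw [Finset.sum_const, smul_eq_mul]
        _ ≤ 2 ^ (d + 1) * (d + 1) * (s * V.card ^ d) :=
            Nat.mul_le_mul_right _ hPcard
    -- numeric bound
    have key : 2 ^ (d + 1) * (d + 1) * s < V.card := by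
      have hkey : ((2 ^ (d + 1) * (d + 1) * s : ℕ) : ℝ) < (V.card : ℝ) := by
        push_cast
        have h1 : (2:ℝ) ^ (d + 1) * (d + 1) * s < 2 ^ (d + 1) * (d + 1) * (r + d + 1) := by
          apply mul_lt_mul_of_pos_left hsr
          positivity
        have h2 : r + (d:ℝ) + 1 ≤ ((d:ℝ) + 2) * r := by nlinarith
        have h3 : ((2 ^ (d+1) * (d+2) : ℕ) : ℝ) ≤ ((4 * (d+1)^d : ℕ) : ℝ) := by
          exact_mod_cast powAux d hd
        push_cast at h3
        have h4 : (2:ℝ) ^ (d + 1) * (d + 1) * ((d + 2) * r)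
            ≤ 4 * ((d:ℝ) + 1) ^ (d + 1) * r := by
          have : (2:ℝ) ^ (d + 1) * (d + 2) * ((d:ℝ)+1) ≤ 4 * ((d:ℝ)+1)^d * ((d:ℝ)+1) := by
            nlinarith
          calc (2:ℝ) ^ (d + 1) * (d + 1) * ((d + 2) * r)
              = ((2:ℝ) ^ (d + 1) * (d + 2) * ((d:ℝ)+1)) * r := by ring
            _ ≤ (4 * ((d:ℝ)+1)^d * ((d:ℝ)+1)) * r := by nlinarith
            _ = 4 * ((d:ℝ) + 1) ^ (d + 1) * r := by ring
        have h5 : (2:ℝ) ^ (d + 1) * (d + 1) * (r + d + 1)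
            ≤ 4 * ((d:ℝ) + 1) ^ (d + 1) * r := by
          calc (2:ℝ) ^ (d + 1) * (d + 1) * (r + d + 1)
              ≤ (2:ℝ) ^ (d + 1) * (d + 1) * ((d + 2) * r) := by
                apply mul_le_mul_of_nonneg_left h2; positivity
            _ ≤ _ := h4
        rw [hnr]
        linarith
      exact_mod_cast hkey
    have hlt : Bad.card < Ω.card := by
      rw [hΩcard]
      calc Bad.card ≤ 2 ^ (d + 1) * (d + 1) * (s * V.card ^ d) := hBadcard
        _ = (2 ^ (d + 1) * (d + 1) * s) * V.card ^ d := by ring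
        _ < V.card * V.card ^ d :=
            mul_lt_mul_of_pos_right key (Nat.pow_pos (by omega))
        _ = V.card ^ (d + 1) := by rw [← pow_succ']
    -- a good function exists
    have hgoodex : ∃ x ∈ Ω, x ∉ Bad := by
      by_contra hbad
      push_neg at hbad
      exact absurd (Finset.card_le_card (fun x hx => hbad x hx)) (Nat.not_le.mpr hlt)
    obtain ⟨x, hxΩ, hxB⟩ := hgoodex
    have hxV : ∀ i, x i ∈ V := Fintype.mem_piFinset.mp hxΩ
    have hgood : ∀ (I : Finset (Fin (d+1))) (j : Fin (d+1)), j ∉ I →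
        x j ∉ cov (I.image x) := by
      intro I j hj hmem
      exact hxB (Finset.mem_filter.mpr ⟨hxΩ, ⟨(I, j), hj, hmem⟩⟩)
    -- x is injective
    have hinj : Function.Injective x := by
      intro i j hij
      by_contra hne
      apply hgood {i} j (by simp [Ne.symm hne])
      have h1 : ({i} : Finset (Fin (d+1))).image x = {x i} := by simp
      rw [h1]
      have hsub : ({x i} : Finset α) ⊆ V := by simp [hxV i]
      have hcard : ({x i} : Finset α).card ≤ d + 1 := by simp
      have := (hcov _ hsub hcard).2.1
      rw [← hij]
      exact this (Finset.mem_singleton_self _)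
    set S : Finset α := univ.image x with hSdef
    have hScard : S.card = d + 1 := by
      rw [hSdef, Finset.card_image_of_injective _ hinj, Finset.card_univ, Fintype.card_fin]
    have hSV : S ⊆ V := by
      intro a ha
      obtain ⟨i, _, rfl⟩ := Finset.mem_image.mp ha
      exact hxV i
    have hshat : ∀ B : Finset α, B ⊆ S → ∃ e ∈ E, e ∩ S = B := by
      intro B hB
      set I : Finset (Fin (d+1)) := univ.filter (fun i => x i ∈ B) with hIdef
      have hIB : I.image x = B := by
        apply Finset.Subset.antisymm
        · intro a ha
          obtain ⟨i, hi, rfl⟩ := Finset.mem_image.mp ha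
          exact (Finset.mem_filter.mp hi).2
        · intro b hb
          obtain ⟨i, _, rfl⟩ := Finset.mem_image.mp (hB hb)
          exact Finset.mem_image.mpr ⟨i, Finset.mem_filter.mpr ⟨mem_univ i, hb⟩, rfl⟩
      have hBV : B ⊆ V := hB.trans hSV
      have hBc : B.card ≤ d + 1 := hScard ▸ Finset.card_le_card hB
      by_cases hI : I = univ
      · have hBS : B = S := by rw [← hIB, hI, hSdef]
        refine ⟨cov S, (hcov S hSV (by omega)).1, ?_⟩
        rw [hBS, Finset.inter_eq_right]
        exact (hcov S hSV (by omega)).2.1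
      · have : ∃ j, j ∉ I := by
          by_contra hall
          push_neg at hall
          exact hI (Finset.eq_univ_iff_forall.mpr hall)
        obtain ⟨j, hj⟩ := this
        refine ⟨cov B, (hcov B hBV hBc).1, ?_⟩
        apply Finset.Subset.antisymm
        · intro v hv
          obtain ⟨hv1, hv2⟩ := Finset.mem_inter.mp hv
          obtain ⟨i, _, rfl⟩ := Finset.mem_image.mp hv2
          by_cases hiI : i ∈ I
          · exact (Finset.mem_filter.mp hiI).2
          · exact absurd (hIB ▸ hv1) (hgood I i hiI)
        · intro v hv
          exact Finset.mem_inter.mpr ⟨(hcov B hBV hBc).2.1 hv, hB hv⟩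
    have := hVC S hSV hshat
    omega
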